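/- Let f ∈ k[t][X] be irreducible of degree ≥ 1 in X, let R = k[t][X]/(f) with fraction field L, let C̄ be the integral closure of R in L, and let B be the integral closure of k[t] in L. Then B ⊆ C̄ (equivalently, every valuation subring of L containing C̄ contains B, i.e., every place of L centered on the affine curve Spec R is a finite place of L over k(t)). Moreover B = C̄ (equivalently, the places centered on Spec R are exactly the finite places) if and only if the leading coefficient of f with respect to X is a nonzero element of k (i.e., f is monic in X up to a unit). -/

import Mathlib

/-- The affine coordinate ring `R = k[t][X]/(f)`. -/
abbrev CoordRing (k : Type*) [Field k] (f : Polynomial (Polynomial k)) :=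
  Polynomial (Polynomial k) ⧸ (Ideal.span {f} : Ideal (Polynomial (Polynomial k)))

/-- The integral closure `B` of `k[t]` in `L` is contained in the integral closure `C̄` of
`R = k[t][X]/(f)` in `L`, with equality if and only if the leading coefficient of `f`
with respect to `X` is a nonzero constant. -/
theorem stmt_18 {k : Type*} [Field k] [PerfectField k]
    (f : Polynomial (Polynomial k)) (hdeg : 1 ≤ f.natDegree) (hirr : Irreducible f)
    [hpr : (Ideal.span {f} : Ideal (Polynomial (Polynomial k))).IsPrime]
    (L : Type*) [Field L] [Algebra (CoordRing k f) L] [IsFractionRing (CoordRing k f) L]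
    [Algebra (Polynomial k) L] [IsScalarTower (Polynomial k) (CoordRing k f) L] :
    ((integralClosure (Polynomial k) L : Set L) ⊆ (integralClosure (CoordRing k f) L : Set L)) ∧
    ((integralClosure (Polynomial k) L : Set L) = (integralClosure (CoordRing k f) L : Set L) ↔
      ∃ c : k, c ≠ 0 ∧ f.leadingCoeff = Polynomial.C c) := by
  set I : Ideal (Polynomial (Polynomial k)) := Ideal.span {f} with hI
  let x₀ : CoordRing k f := Ideal.Quotient.mk I Polynomial.X
  have key : ∀ g : Polynomial (Polynomial k),
      Polynomial.aeval x₀ g = Ideal.Quotient.mk I g := by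
    intro g
    have h := Polynomial.aeval_algHom_apply (Ideal.Quotient.mkₐ (Polynomial k) I)
      (Polynomial.X : Polynomial (Polynomial k)) g
    simpa [Polynomial.aeval_X_left] using h
  have part1 : (integralClosure (Polynomial k) L : Set L) ⊆
      (integralClosure (CoordRing k f) L : Set L) := by
    intro x hx
    exact IsIntegral.tower_top (A := CoordRing k f) hx
  refine ⟨part1, ?_, ?_⟩
  · -- equality → leading coeff constant
    intro heq
    have hx : IsIntegral (CoordRing k f) (algebraMap (CoordRing k f) L x₀) :=
      isIntegral_algebraMap
    have hx' : IsIntegral (Polynomial k) (@algebraMap (CoordRing k f) L inferInstance inferInstance inferInstance x₀) := by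
      have : @algebraMap (CoordRing k f) L inferInstance inferInstance inferInstance x₀ ∈ (integralClosure (Polynomial k) L : Set L) := by
        rw [heq]; exact hx
      exact this
    obtain ⟨g, hg, hev⟩ := hx'
    have hev' : Polynomial.aeval (algebraMap (CoordRing k f) L x₀) g = 0 := hev
    rw [Polynomial.aeval_algebraMap_apply] at hev'
    have hinj : Function.Injective (algebraMap (CoordRing k f) L) :=
      IsFractionRing.injective _ _
    have h0 : Polynomial.aeval x₀ g = 0 := by
      apply hinj; rw [hev', map_zero]
    rw [key] at h0
    have hmem : g ∈ I := (Ideal.Quotient.eq_zero_iff_mem).mp h0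
    rw [hI, Ideal.mem_span_singleton] at hmem
    obtain ⟨h, rfl⟩ := hmem
    have hlc : f.leadingCoeff * h.leadingCoeff = 1 := by
      have := Polynomial.Monic.leadingCoeff hg
      rwa [Polynomial.leadingCoeff_mul] at this
    have hu : IsUnit f.leadingCoeff := IsUnit.of_mul_eq_one _ hlc
    obtain ⟨c, hc, hcc⟩ := Polynomial.isUnit_iff.mp hu
    exact ⟨c, hc.ne_zero, hcc.symm⟩
  · -- leading coeff constant → equality
    rintro ⟨c, hc0, hc⟩
    have hroot : IsIntegral (Polynomial k) x₀ := by
      refine ⟨Polynomial.C (Polynomial.C c⁻¹) * f, ?_, ?_⟩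
      · have : (Polynomial.C (Polynomial.C c⁻¹) * f).leadingCoeff = 1 := by
          rw [Polynomial.leadingCoeff_mul, Polynomial.leadingCoeff_C, hc, ← Polynomial.C_mul,
            inv_mul_cancel₀ hc0, Polynomial.C_1]
        exact this
      · show Polynomial.aeval x₀ (Polynomial.C (Polynomial.C c⁻¹) * f) = 0
        rw [key, map_mul, Ideal.Quotient.eq_zero_iff_mem.mpr
          (Ideal.mem_span_singleton_self f)]
        exact mul_zero (M₀ := CoordRing k f) _
    have hint : Algebra.IsIntegral (Polynomial k) (CoordRing k f) := by
      constructor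
      intro y
      obtain ⟨p, rfl⟩ := Ideal.Quotient.mk_surjective (I := I) y
      rw [← key]
      exact IsIntegral.of_mem_of_fg _ hroot.fg_adjoin_singleton _
        (Polynomial.aeval_mem_adjoin_singleton _ _)
    apply Set.Subset.antisymm part1
    intro x hx
    exact isIntegral_trans (R := Polynomial k) x hx
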